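/- Fix integers n ≥ 1 and N ≥ 2, let σ be the uniform (normalized surface) probability measure on 𝕊^n ⊂ ℝ^{n+1}, let μ₀ be a Borel probability measure on 𝕊^n absolutely continuous with respect to σ, and let μ := μ₀^{⊗N} on (𝕊^n)^N. Then for every measurable φ : [0,π] → ℝ with ‖φ‖²_{L²(ρ)} := (1/(N(N−1))) Σ_{i ≠ j} ∫ φ(d(x_i,x_j))² d(x_i,x_j)² dμ(X) < ∞, one has ‖f_φ‖²_{L²(μ)} ≥ ((N−1)/N²) ‖φ‖²_{L²(ρ)}. -/

import Mathlib

open MeasureTheory Finset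
open scoped ENNReal RealInnerProductSpace

/-- Geodesic distance on the unit sphere: `d(x,y) = arccos⟨x,y⟩`. -/
noncomputable def sphereDist {n : ℕ} (x y : EuclideanSpace ℝ (Fin (n + 1))) : ℝ :=
  Real.arccos ⟪x, y⟫

open Classical in
/-- The influence vector on the unit sphere:
`w(x,y) = d(x,y)·(y − ⟨x,y⟩x)/‖y − ⟨x,y⟩x‖` if `y ≠ ±x`, and `0` otherwise. -/
noncomputable def sphereW {n : ℕ} (x y : EuclideanSpace ℝ (Fin (n + 1))) :
    EuclideanSpace ℝ (Fin (n + 1)) :=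
  if y = x ∨ y = -x then 0
  else sphereDist x y • (‖y - ⟪x, y⟫ • x‖⁻¹ • (y - ⟪x, y⟫ • x))

/-- The interaction velocity field on the sphere:
`f_φ(X)_i = (1/N) ∑_{j ≠ i} φ(d(x_i,x_j)) w(x_i,x_j)`. -/
noncomputable def sphereField (n N : ℕ) (φ : ℝ → ℝ)
    (X : Fin N → EuclideanSpace ℝ (Fin (n + 1))) (i : Fin N) :
    EuclideanSpace ℝ (Fin (n + 1)) :=
  (N : ℝ)⁻¹ • ∑ j ∈ Finset.univ.erase i, φ (sphereDist (X i) (X j)) • sphereW (X i) (X j)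

/-- The squared `L²(ρ)` norm on the sphere:
`‖φ‖²_{L²(ρ)} = (1/(N(N−1))) ∑_{i≠j} ∫ φ(d(x_i,x_j))² d(x_i,x_j)² dμ(X)`. -/
noncomputable def sphereRhoSqNorm (n N : ℕ)
    (μ : Measure (Fin N → EuclideanSpace ℝ (Fin (n + 1)))) (φ : ℝ → ℝ) : ℝ≥0∞ :=
  ((N * (N - 1) : ℕ) : ℝ≥0∞)⁻¹ *
    ∑ i : Fin N, ∑ j ∈ Finset.univ.erase i,
      ∫⁻ X, ENNReal.ofReal
        ((φ (sphereDist (X i) (X j))) ^ 2 * (sphereDist (X i) (X j)) ^ 2) ∂μ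

/-- The squared `L²(μ)` norm of the interaction field on the sphere. -/
noncomputable def sphereFieldSqNorm (n N : ℕ)
    (μ : Measure (Fin N → EuclideanSpace ℝ (Fin (n + 1)))) (φ : ℝ → ℝ) : ℝ≥0∞ :=
  ∫⁻ X, ENNReal.ofReal ((N : ℝ)⁻¹ * ∑ i : Fin N, ‖sphereField n N φ X i‖ ^ 2) ∂μ

section Aux

open Classical in
theorem map_comp_pi {α : Type*} [MeasurableSpace α] (μ₀ : Measure α) [IsProbabilityMeasure μ₀]
    {m N : ℕ} (ι : Fin m → Fin N) (hι : Function.Injective ι) :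
    Measure.map (fun X : Fin N → α => X ∘ ι) (Measure.pi fun _ : Fin N => μ₀)
      = Measure.pi (fun _ : Fin m => μ₀) := by
  refine (Measure.pi_eq (μ := fun _ : Fin m => μ₀) fun s hs => ?_).symm
  have hmeas : Measurable (fun X : Fin N → α => X ∘ ι) :=
    measurable_pi_iff.mpr fun t => measurable_pi_apply _
  rw [Measure.map_apply hmeas (MeasurableSet.univ_pi hs)]
  have hFc : ∀ t : Fin m, (fun l => if h : ∃ t, ι t = l then s h.choose else Set.univ) (ι t) = s t := by
    intro t
    have he : ∃ t', ι t' = ι t := ⟨t, rfl⟩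
    simp only [dif_pos he]
    rw [hι he.choose_spec]
  set F : Fin N → Set α := fun l => if h : ∃ t, ι t = l then s h.choose else Set.univ with hF
  have hpre : (fun X : Fin N → α => X ∘ ι) ⁻¹' (Set.pi Set.univ s) = Set.pi Set.univ F := by
    ext X
    simp only [Set.mem_preimage, Set.mem_pi, Set.mem_univ, forall_true_left, Function.comp]
    constructor
    · intro h l
      by_cases hl : ∃ t, ι t = l
      · simp only [hF, dif_pos hl]
        have := h hl.choose; rwa [hl.choose_spec] at this
      · simp only [hF, dif_neg hl]; trivial
    · intro h t
      have := h (ι t)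
      rwa [hFc t] at this
  rw [hpre, Measure.pi_pi]
  rw [← Finset.prod_subset (Finset.subset_univ (Finset.image ι Finset.univ))
    (fun l _ hl => by
      have : ¬ ∃ t, ι t = l := by
        simpa [Finset.mem_image] using hl
      simp only [hF, dif_neg this]; exact measure_univ)]
  rw [Finset.prod_image (fun a _ b _ h => hι h)]
  exact Finset.prod_congr rfl fun t _ => by rw [hFc t]

set_option linter.unreachableTactic false in
set_option linter.unusedTactic false in
theorem map_pair_pi {α : Type*} [MeasurableSpace α] (μ₀ : Measure α) [IsProbabilityMeasure μ₀]
    {N : ℕ} {i j : Fin N} (hij : i ≠ j) :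
    Measure.map (fun X : Fin N → α => (X i, X j)) (Measure.pi fun _ : Fin N => μ₀)
      = μ₀.prod μ₀ := by
  have hinj : Function.Injective ![i, j] := by
    intro a b hab
    fin_cases a <;> fin_cases b <;> simp_all [Matrix.cons_val_zero, Matrix.cons_val_one] <;>
      exact absurd hab.symm hij
  have hcomp : (fun X : Fin N → α => (X i, X j))
      = (MeasurableEquiv.finTwoArrow : (Fin 2 → α) ≃ᵐ α × α) ∘ (fun X => X ∘ ![i, j]) := by
    funext X
    simp [MeasurableEquiv.finTwoArrow, Function.comp]
  have hmp1 : MeasurePreserving (fun X : Fin N → α => X ∘ ![i, j])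
      (Measure.pi fun _ : Fin N => μ₀) (Measure.pi fun _ : Fin 2 => μ₀) :=
    ⟨measurable_pi_iff.mpr fun t => measurable_pi_apply _, map_comp_pi μ₀ _ hinj⟩
  rw [hcomp]
  exact ((measurePreserving_finTwoArrow μ₀).comp hmp1).map_eq

set_option linter.unreachableTactic false in
set_option linter.unusedTactic false in
theorem map_triple_pi {α : Type*} [MeasurableSpace α] (μ₀ : Measure α) [IsProbabilityMeasure μ₀]
    {N : ℕ} {i j k : Fin N} (hij : i ≠ j) (hik : i ≠ k) (hjk : j ≠ k) :
    Measure.map (fun X : Fin N → α => (X i, X j, X k)) (Measure.pi fun _ : Fin N => μ₀)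
      = μ₀.prod (μ₀.prod μ₀) := by
  have hinj : Function.Injective ![i, j, k] := by
    intro a b hab
    fin_cases a <;> fin_cases b <;> simp_all <;> first
      | rfl
      | exact absurd hab.symm hij
      | exact absurd hab.symm hik
      | exact absurd hab.symm hjk
  set e : (Fin 3 → α) ≃ᵐ α × α × α :=
    (MeasurableEquiv.piFinSuccAbove (fun _ : Fin 3 => α) 0).trans
      ((MeasurableEquiv.refl α).prodCongr (MeasurableEquiv.finTwoArrow)) with he
  have hemp : MeasurePreserving e (Measure.pi fun _ : Fin 3 => μ₀) (μ₀.prod (μ₀.prod μ₀)) := by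
    rw [he]
    exact ((MeasurePreserving.id μ₀).prod (measurePreserving_finTwoArrow μ₀)).comp
      (measurePreserving_piFinSuccAbove (fun _ : Fin 3 => μ₀) 0)
  have hcomp : (fun X : Fin N → α => (X i, X j, X k)) = e ∘ (fun X => X ∘ ![i, j, k]) := by
    funext X
    rw [he]
    simp [MeasurableEquiv.piFinSuccAbove, MeasurableEquiv.finTwoArrow, MeasurableEquiv.prodCongr,
      MeasurableEquiv.trans, MeasurableEquiv.refl, Function.comp, Fin.succAbove]
    constructor <;> rfl
  have hmp1 : MeasurePreserving (fun X : Fin N → α => X ∘ ![i, j, k])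
      (Measure.pi fun _ : Fin N => μ₀) (Measure.pi fun _ : Fin 3 => μ₀) :=
    ⟨measurable_pi_iff.mpr fun t => measurable_pi_apply _, map_comp_pi μ₀ _ hinj⟩
  rw [hcomp]
  exact (hemp.comp hmp1).map_eq

theorem coe_nnnorm_sq_eq_ofReal {E : Type*} [NormedAddCommGroup E] (v : E) :
    (‖v‖₊ : ℝ≥0∞) ^ 2 = ENNReal.ofReal (‖v‖ ^ 2) := by
  rw [← enorm_eq_nnnorm, ← ofReal_norm, ← ENNReal.ofReal_pow (norm_nonneg _)]

theorem memℒp_two_of_lintegral {α : Type*} {E : Type*} [MeasurableSpace α]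
    [NormedAddCommGroup E] {μ : Measure α} {f : α → E}
    (hf : AEStronglyMeasurable f μ)
    (h : ∫⁻ a, ENNReal.ofReal (‖f a‖ ^ 2) ∂μ ≠ ⊤) : MemLp f 2 μ := by
  refine ⟨hf, ?_⟩
  rw [eLpNorm_eq_lintegral_rpow_enorm_toReal (by norm_num) (by norm_num)]
  refine ENNReal.rpow_lt_top_of_nonneg (by norm_num) ?_
  rw [show ((2:ℝ≥0∞).toReal) = (2:ℝ) by norm_num]
  have heq : ∀ a, (‖f a‖₊ : ℝ≥0∞) ^ (2:ℝ) = ENNReal.ofReal (‖f a‖ ^ 2) := by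
    intro a
    rw [show (2:ℝ) = ((2:ℕ):ℝ) by norm_num, ENNReal.rpow_natCast]
    exact coe_nnnorm_sq_eq_ofReal _
  simp only [enorm_eq_nnnorm]; rw [lintegral_congr heq]
  exact h

end Aux

section Core

variable {E : Type*} [NormedAddCommGroup E] [InnerProductSpace ℝ E]
  [MeasurableSpace E] [BorelSpace E] [SecondCountableTopology E] [CompleteSpace E]

theorem core_nonneg (μ₀ : Measure E) [IsProbabilityMeasure μ₀] (G : E → E → E)
    (hG : Measurable (fun p : E × E => G p.1 p.2))
    (hint : ∫⁻ p : E × E, (‖G p.1 p.2‖₊ : ℝ≥0∞) ^ 2 ∂(μ₀.prod μ₀) ≠ ⊤) :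
    0 ≤ ∫ p : E × E × E, ⟪G p.1 p.2.1, G p.1 p.2.2⟫ ∂(μ₀.prod (μ₀.prod μ₀)) := by
  have hfst : MeasurePreserving (Prod.fst : E × E → E) (μ₀.prod μ₀) μ₀ :=
    ⟨measurable_fst, by rw [Measure.map_fst_prod]; simp⟩
  have hsnd : MeasurePreserving (Prod.snd : E × E → E) (μ₀.prod μ₀) μ₀ :=
    ⟨measurable_snd, by rw [Measure.map_snd_prod]; simp⟩
  -- squared-norm integrability on the pair space
  have hGsq : Integrable (fun q : E × E => ‖G q.1 q.2‖ ^ 2) (μ₀.prod μ₀) := by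
    refine ⟨(hG.norm.pow_const 2).aestronglyMeasurable, ?_⟩
    rw [HasFiniteIntegral]
    calc ∫⁻ q, ‖‖G q.1 q.2‖ ^ 2‖₊ ∂(μ₀.prod μ₀)
        = ∫⁻ q : E × E, (‖G q.1 q.2‖₊ : ℝ≥0∞) ^ 2 ∂(μ₀.prod μ₀) := by
          apply lintegral_congr; intro q
          simp [pow_two]
      _ < ⊤ := hint.lt_top
  -- the two projections from the triple space to the pair space
  have hT1 : MeasurePreserving (fun p : E × E × E => (p.1, p.2.1))
      (μ₀.prod (μ₀.prod μ₀)) (μ₀.prod μ₀) :=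
    (MeasurePreserving.id μ₀).prod hfst
  have hT2 : MeasurePreserving (fun p : E × E × E => (p.1, p.2.2))
      (μ₀.prod (μ₀.prod μ₀)) (μ₀.prod μ₀) :=
    (MeasurePreserving.id μ₀).prod hsnd
  have h1 : Integrable (fun p : E × E × E => ‖G p.1 p.2.1‖ ^ 2) (μ₀.prod (μ₀.prod μ₀)) :=
    (hT1.integrable_comp hGsq.aestronglyMeasurable).mpr hGsq
  have h2 : Integrable (fun p : E × E × E => ‖G p.1 p.2.2‖ ^ 2) (μ₀.prod (μ₀.prod μ₀)) :=
    (hT2.integrable_comp hGsq.aestronglyMeasurable).mpr hGsq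
  have hFmeas : Measurable (fun p : E × E × E => ⟪G p.1 p.2.1, G p.1 p.2.2⟫) := by
    apply Measurable.inner
    · exact hG.comp (measurable_fst.prodMk (measurable_fst.comp measurable_snd))
    · exact hG.comp (measurable_fst.prodMk (measurable_snd.comp measurable_snd))
  have hF : Integrable (fun p : E × E × E => ⟪G p.1 p.2.1, G p.1 p.2.2⟫)
      (μ₀.prod (μ₀.prod μ₀)) := by
    refine Integrable.mono' ((h1.add h2).const_mul (1/2 : ℝ)) hFmeas.aestronglyMeasurable ?_
    filter_upwards with p
    calc ‖⟪G p.1 p.2.1, G p.1 p.2.2⟫‖ ≤ ‖G p.1 p.2.1‖ * ‖G p.1 p.2.2‖ := norm_inner_le_norm (𝕜 := ℝ) _ _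
      _ ≤ 1/2 * (‖G p.1 p.2.1‖ ^ 2 + ‖G p.1 p.2.2‖ ^ 2) := by nlinarith [sq_nonneg (‖G p.1 p.2.1‖ - ‖G p.1 p.2.2‖)]
  -- a.e. integrability of G x ·
  have hsliceL2 : ∀ᵐ x ∂μ₀, Integrable (fun y => G x y) μ₀ := by
    have hlt : ∀ᵐ x ∂μ₀, ∫⁻ y, (‖G x y‖₊ : ℝ≥0∞) ^ 2 ∂μ₀ ≠ ⊤ := by
      have := lintegral_prod (μ := μ₀) (ν := μ₀) (fun q : E × E => (‖G q.1 q.2‖₊ : ℝ≥0∞) ^ 2)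
        ((hG.nnnorm.coe_nnreal_ennreal.pow_const 2).aemeasurable)
      rw [this] at hint
      exact ae_lt_top ((hG.nnnorm.coe_nnreal_ennreal.pow_const 2).lintegral_prod_right') hint |>.mono fun x hx => hx.ne
    filter_upwards [hlt] with x hx
    have hmemp : MemLp (fun y => G x y) 2 μ₀ := by
      constructor
      · exact (hG.comp (measurable_const.prodMk measurable_id)).aestronglyMeasurable
      · rw [eLpNorm_eq_lintegral_rpow_enorm_toReal (by norm_num) (by norm_num)]
        refine ENNReal.rpow_lt_top_of_nonneg (by norm_num) ?_
        rw [show ((2:ℝ≥0∞).toReal) = (2:ℝ) by norm_num]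
        have : ∀ y, (‖G x y‖₊ : ℝ≥0∞) ^ (2:ℝ) = (‖G x y‖₊ : ℝ≥0∞) ^ (2:ℕ) := by
          intro y; rw [← ENNReal.rpow_natCast]; norm_num
        simp only [enorm_eq_nnnorm]; rw [lintegral_congr this]
        exact hx
    exact hmemp.integrable one_le_two
  -- Fubini
  rw [integral_prod _ hF]
  refine integral_nonneg_of_ae ?_
  filter_upwards [hF.prod_right_ae, hsliceL2] with x hFx hGx
  have hinner : ∀ y, ∫ z, ⟪G x y, G x z⟫ ∂μ₀ = ⟪G x y, ∫ z, G x z ∂μ₀⟫ :=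
    fun y => integral_inner hGx _
  rw [integral_prod _ hFx]
  have : ∫ y, ∫ z, ⟪G x y, G x z⟫ ∂μ₀ ∂μ₀ = ‖∫ z, G x z ∂μ₀‖ ^ 2 := by
    calc ∫ y, ∫ z, ⟪G x y, G x z⟫ ∂μ₀ ∂μ₀ = ∫ y, ⟪G x y, ∫ z, G x z ∂μ₀⟫ ∂μ₀ := by
          exact integral_congr_ae (Filter.Eventually.of_forall fun y => hinner y)
      _ = ∫ y, ⟪(∫ z, G x z ∂μ₀), G x y⟫ ∂μ₀ := by
          exact integral_congr_ae (Filter.Eventually.of_forall fun y => real_inner_comm _ _)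
      _ = ⟪(∫ z, G x z ∂μ₀), ∫ y, G x y ∂μ₀⟫ := integral_inner hGx _
      _ = ‖∫ z, G x z ∂μ₀‖ ^ 2 := real_inner_self_eq_norm_sq _
  rw [this]
  positivity


theorem key_lintegral_bound (μ₀ : Measure E) [IsProbabilityMeasure μ₀] (G : E → E → E)
    (hG : Measurable (fun p : E × E => G p.1 p.2))
    {N : ℕ} (i : Fin N) (A : ℝ≥0∞)
    (hA : ∫⁻ p : E × E, ENNReal.ofReal (‖G p.1 p.2‖ ^ 2) ∂(μ₀.prod μ₀) = A) (hAtop : A ≠ ⊤) :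
    ∑ _j ∈ Finset.univ.erase i, A ≤
      ∫⁻ X : Fin N → E, ENNReal.ofReal (‖∑ j ∈ Finset.univ.erase i, G (X i) (X j)‖ ^ 2)
        ∂(Measure.pi fun _ : Fin N => μ₀) := by
  classical
  set μ : Measure (Fin N → E) := Measure.pi fun _ : Fin N => μ₀ with hμdef
  set S : Finset (Fin N) := Finset.univ.erase i with hS
  set g : Fin N → (Fin N → E) → E := fun j X => G (X i) (X j) with hg
  have hgmeas : ∀ j, Measurable (g j) := by
    intro j
    exact Measurable.comp (f := fun X : Fin N → E => (X i, X j))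
      (g := fun p : E × E => G p.1 p.2) hG
      ((measurable_pi_apply i).prodMk (measurable_pi_apply j))
  have hGsqmeas : Measurable (fun p : E × E => ENNReal.ofReal (‖G p.1 p.2‖ ^ 2)) :=
    (hG.norm.pow_const 2).ennreal_ofReal
  have hgA : ∀ j ∈ S, ∫⁻ X, ENNReal.ofReal (‖g j X‖ ^ 2) ∂μ = A := by
    intro j hj
    have hij : i ≠ j := (Finset.ne_of_mem_erase hj).symm
    have hm := lintegral_map (μ := μ) (g := fun X : Fin N → E => (X i, X j))
      (f := fun p : E × E => ENNReal.ofReal (‖G p.1 p.2‖ ^ 2)) hGsqmeas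
      ((measurable_pi_apply i).prodMk (measurable_pi_apply j))
    rw [hμdef, map_pair_pi μ₀ hij, hA] at hm
    exact hm.symm
  have hgmem : ∀ j ∈ S, MemLp (g j) 2 μ := fun j hj =>
    memℒp_two_of_lintegral (hgmeas j).aestronglyMeasurable (by rw [hgA j hj]; exact hAtop)
  have hgsq_int : ∀ j ∈ S, Integrable (fun X => ‖g j X‖ ^ 2) μ := fun j hj =>
    ((hgmem j hj).norm).integrable_sq
  have hinner_int : ∀ j ∈ S, ∀ k ∈ S, Integrable (fun X => ⟪g j X, g k X⟫) μ := by
    intro j hj k hk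
    refine Integrable.mono' (((hgsq_int j hj).add (hgsq_int k hk)).const_mul (1/2 : ℝ))
      ((hgmeas j).inner (hgmeas k)).aestronglyMeasurable ?_
    filter_upwards with X
    calc ‖⟪g j X, g k X⟫‖ ≤ ‖g j X‖ * ‖g k X‖ := norm_inner_le_norm (𝕜 := ℝ) _ _
      _ ≤ 1/2 * (‖g j X‖ ^ 2 + ‖g k X‖ ^ 2) := by
          nlinarith [sq_nonneg (‖g j X‖ - ‖g k X‖)]
  have hGnn_int : ∫⁻ p : E × E, (‖G p.1 p.2‖₊ : ℝ≥0∞) ^ 2 ∂(μ₀.prod μ₀) ≠ ⊤ := by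
    have heq : ∫⁻ p : E × E, (‖G p.1 p.2‖₊ : ℝ≥0∞) ^ 2 ∂(μ₀.prod μ₀)
        = ∫⁻ p : E × E, ENNReal.ofReal (‖G p.1 p.2‖ ^ 2) ∂(μ₀.prod μ₀) :=
      lintegral_congr fun p => coe_nnnorm_sq_eq_ofReal _
    rw [heq, hA]
    exact hAtop
  have hnonneg : ∀ j ∈ S, ∀ k ∈ S, 0 ≤ ∫ X, ⟪g j X, g k X⟫ ∂μ := by
    intro j hj k hk
    by_cases hjk : j = k
    · subst hjk
      exact integral_nonneg fun X => real_inner_self_nonneg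
    · have hij : i ≠ j := (Finset.ne_of_mem_erase hj).symm
      have hik : i ≠ k := (Finset.ne_of_mem_erase hk).symm
      have hmp := map_triple_pi μ₀ (i := i) (j := j) (k := k) hij hik hjk
      have hFmeas : Measurable (fun p : E × E × E => ⟪G p.1 p.2.1, G p.1 p.2.2⟫) := by
        apply Measurable.inner
        · exact hG.comp (measurable_fst.prodMk (measurable_fst.comp measurable_snd))
        · exact hG.comp (measurable_fst.prodMk (measurable_snd.comp measurable_snd))
      have hTmeas : Measurable (fun X : Fin N → E => (X i, X j, X k)) :=
        (measurable_pi_apply i).prodMk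
          ((measurable_pi_apply j).prodMk (measurable_pi_apply k))
      calc (0:ℝ) ≤ ∫ p : E × E × E, ⟪G p.1 p.2.1, G p.1 p.2.2⟫ ∂(μ₀.prod (μ₀.prod μ₀)) :=
            core_nonneg μ₀ G hG hGnn_int
        _ = ∫ X, ⟪g j X, g k X⟫ ∂μ := by
            rw [hμdef, ← map_triple_pi μ₀ (i := i) (j := j) (k := k) hij hik hjk]
            exact integral_map hTmeas.aemeasurable hFmeas.aestronglyMeasurable
  set T : (Fin N → E) → E := fun X => ∑ j ∈ S, g j X with hT
  have hTmem : MemLp T 2 μ := by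
    have h := memLp_finset_sum' S hgmem
    have heq : (∑ j ∈ S, g j) = T := funext fun X => by simp [hT]
    rwa [heq] at h
  have hTsq_int : Integrable (fun X => ‖T X‖ ^ 2) μ := hTmem.norm.integrable_sq
  have hexp : ∫ X, ‖T X‖ ^ 2 ∂μ = ∑ j ∈ S, ∑ k ∈ S, ∫ X, ⟪g j X, g k X⟫ ∂μ := by
    have hpt : ∀ X, ‖T X‖ ^ 2 = ∑ j ∈ S, ∑ k ∈ S, ⟪g j X, g k X⟫ := by
      intro X
      rw [hT]
      rw [← real_inner_self_eq_norm_sq, sum_inner]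
      exact Finset.sum_congr rfl fun j _ => inner_sum _ _ _
    rw [show (fun X => ‖T X‖ ^ 2) = fun X => ∑ j ∈ S, ∑ k ∈ S, ⟪g j X, g k X⟫ from funext hpt]
    rw [integral_finset_sum S (fun j hj => integrable_finset_sum S fun k hk => hinner_int j hj k hk)]
    exact Finset.sum_congr rfl fun j hj =>
      integral_finset_sum S fun k hk => hinner_int j hj k hk
  have hdiag : ∀ j ∈ S, ENNReal.ofReal (∫ X, ⟪g j X, g j X⟫ ∂μ) = A := by
    intro j hj
    have heq : (fun X => ⟪g j X, g j X⟫) = fun X => ‖g j X‖ ^ 2 :=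
      funext fun X => real_inner_self_eq_norm_sq _
    rw [heq, ofReal_integral_eq_lintegral_ofReal (hgsq_int j hj)
      (Filter.Eventually.of_forall fun X => sq_nonneg _), hgA j hj]
  calc ∑ _j ∈ S, A = ∑ j ∈ S, ENNReal.ofReal (∫ X, ⟪g j X, g j X⟫ ∂μ) :=
        (Finset.sum_congr rfl fun j hj => hdiag j hj).symm
    _ = ENNReal.ofReal (∑ j ∈ S, ∫ X, ⟪g j X, g j X⟫ ∂μ) :=
        (ENNReal.ofReal_sum_of_nonneg fun j hj => hnonneg j hj j hj).symm
    _ ≤ ENNReal.ofReal (∑ j ∈ S, ∑ k ∈ S, ∫ X, ⟪g j X, g k X⟫ ∂μ) := by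
        apply ENNReal.ofReal_le_ofReal
        refine Finset.sum_le_sum fun j hj => ?_
        exact Finset.single_le_sum (fun k hk => hnonneg j hj k hk) hj
    _ = ENNReal.ofReal (∫ X, ‖T X‖ ^ 2 ∂μ) := by rw [hexp]
    _ = ∫⁻ X, ENNReal.ofReal (‖T X‖ ^ 2) ∂μ :=
        ofReal_integral_eq_lintegral_ofReal hTsq_int
          (Filter.Eventually.of_forall fun X => sq_nonneg _)


variable {n : ℕ}


theorem measurable_sphereDist :
    Measurable (fun p : EuclideanSpace ℝ (Fin (n+1)) × EuclideanSpace ℝ (Fin (n+1)) =>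
      sphereDist p.1 p.2) :=
  (Real.continuous_arccos.comp continuous_inner).measurable

theorem measurable_sphereW :
    Measurable (fun p : EuclideanSpace ℝ (Fin (n+1)) × EuclideanSpace ℝ (Fin (n+1)) =>
      sphereW p.1 p.2) := by
  classical
  have hD : MeasurableSet {p : EuclideanSpace ℝ (Fin (n+1)) × EuclideanSpace ℝ (Fin (n+1)) |
      p.2 = p.1 ∨ p.2 = -p.1} := by
    apply MeasurableSet.union
    · exact measurableSet_eq_fun measurable_snd measurable_fst
    · exact measurableSet_eq_fun measurable_snd measurable_fst.neg
  have hv : Measurable (fun p : EuclideanSpace ℝ (Fin (n+1)) × EuclideanSpace ℝ (Fin (n+1)) =>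
      p.2 - ⟪p.1, p.2⟫ • p.1) :=
    measurable_snd.sub ((measurable_fst.inner (𝕜 := ℝ) measurable_snd).smul measurable_fst)
  have h2 : Measurable (fun p : EuclideanSpace ℝ (Fin (n+1)) × EuclideanSpace ℝ (Fin (n+1)) =>
      sphereDist p.1 p.2 • (‖p.2 - ⟪p.1, p.2⟫ • p.1‖⁻¹ • (p.2 - ⟪p.1, p.2⟫ • p.1))) :=
    measurable_sphereDist.smul ((hv.norm.inv).smul hv)
  have : (fun p : EuclideanSpace ℝ (Fin (n+1)) × EuclideanSpace ℝ (Fin (n+1)) => sphereW p.1 p.2)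
      = fun p => if p ∈ {p : EuclideanSpace ℝ (Fin (n+1)) × EuclideanSpace ℝ (Fin (n+1)) |
      p.2 = p.1 ∨ p.2 = -p.1} then 0
        else sphereDist p.1 p.2 • (‖p.2 - ⟪p.1, p.2⟫ • p.1‖⁻¹ • (p.2 - ⟪p.1, p.2⟫ • p.1)) := by
    funext p; simp [sphereW]
  rw [this]
  exact Measurable.ite hD measurable_const h2

theorem sphereDist_nonneg (x y : EuclideanSpace ℝ (Fin (n + 1))) : 0 ≤ sphereDist x y :=
  Real.arccos_nonneg _

theorem sphereW_norm_le (x y : EuclideanSpace ℝ (Fin (n + 1))) :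
    ‖sphereW x y‖ ≤ sphereDist x y := by
  classical
  rw [sphereW]
  split_ifs with h
  · simpa using sphereDist_nonneg x y
  · rw [norm_smul, norm_smul, norm_inv, norm_norm, Real.norm_eq_abs,
      abs_of_nonneg (sphereDist_nonneg x y)]
    rcases eq_or_ne (y - ⟪x, y⟫ • x) 0 with hv | hv
    · rw [hv]; simp [sphereDist_nonneg x y]
    · rw [inv_mul_cancel₀ (norm_ne_zero_iff.mpr hv), mul_one]

theorem sphereW_norm_eq {x y : EuclideanSpace ℝ (Fin (n + 1))} (hx : ‖x‖ = 1) (hy : ‖y‖ = 1)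
    (hxy : y ≠ -x) : ‖sphereW x y‖ = sphereDist x y := by
  classical
  rcases eq_or_ne y x with hyx | hyx
  · rw [hyx, sphereW, if_pos (Or.inl rfl)]
    have : ⟪x, x⟫ = (1:ℝ) := by
      rw [real_inner_self_eq_norm_sq, hx]; norm_num
    rw [sphereDist, this, Real.arccos_one, norm_zero]
  · have hv : y - ⟪x, y⟫ • x ≠ 0 := by
      intro hv0
      have hyc : y = ⟪x, y⟫ • x := by
        have := sub_eq_zero.mp hv0
        exact this
      have habs : |⟪x, y⟫| = 1 := by
        have : ‖y‖ = ‖⟪x, y⟫ • x‖ := by rw [← hyc]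
        rw [hy, norm_smul, hx, mul_one, Real.norm_eq_abs] at this
        exact this.symm
      rcases abs_eq (by norm_num : (0:ℝ) ≤ 1) |>.mp habs with h1 | h1
      · exact hyx (by rw [hyc, h1, one_smul])
      · exact hxy (by rw [hyc, h1, neg_one_smul])
    rw [sphereW, if_neg (by push_neg; exact ⟨hyx, hxy⟩)]
    rw [norm_smul, norm_smul, norm_inv, norm_norm, Real.norm_eq_abs,
      abs_of_nonneg (sphereDist_nonneg x y), inv_mul_cancel₀ (norm_ne_zero_iff.mpr hv), mul_one]


end Core

theorem sigma_singleton_null {n : ℕ} (hn : 1 ≤ n)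
    (σ : Measure (EuclideanSpace ℝ (Fin (n + 1)))) [IsProbabilityMeasure σ]
    (hσsphere : σ (Metric.sphere (0 : EuclideanSpace ℝ (Fin (n + 1))) 1)ᶜ = 0)
    (hσinv : ∀ O : EuclideanSpace ℝ (Fin (n + 1)) ≃ₗᵢ[ℝ] EuclideanSpace ℝ (Fin (n + 1)),
      Measure.map O σ = σ) (p : EuclideanSpace ℝ (Fin (n + 1))) :
    σ {p} = 0 := by
  by_cases hp : ‖p‖ = 1
  case neg =>
    refine measure_mono_null ?_ hσsphere
    intro z hz
    simp only [Set.mem_singleton_iff] at hz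
    subst hz
    simp only [Set.mem_compl_iff, Metric.mem_sphere, dist_zero_right]
    exact hp
  case pos =>
  -- construct infinitely many distinct unit vectors
  have h01 : (0 : Fin (n+1)) ≠ 1 := by
    have : (1:ℕ) < n + 1 := by omega
    simp [Fin.ext_iff, Fin.val_one, Nat.mod_eq_of_lt this]
  set e0 : EuclideanSpace ℝ (Fin (n+1)) := EuclideanSpace.single 0 1 with he0
  set e1 : EuclideanSpace ℝ (Fin (n+1)) := EuclideanSpace.single 1 1 with he1
  set θ : ℕ → ℝ := fun k => 1 / (k + 1) with hθ
  set u : ℕ → EuclideanSpace ℝ (Fin (n+1)) := fun k => Real.cos (θ k) • e0 + Real.sin (θ k) • e1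
    with hu
  have hθmem : ∀ k, θ k ∈ Set.Icc (0:ℝ) Real.pi := by
    intro k
    constructor
    · positivity
    · have : θ k ≤ 1 := by
        rw [hθ]
        rw [div_le_one (by positivity)]
        simp
      linarith [Real.pi_gt_three]
  have hθinj : Function.Injective θ := by
    intro a b hab
    simp only [hθ] at hab
    field_simp at hab
    exact_mod_cast (by linarith : (a:ℝ) = b)
  have huapply : ∀ k, u k 0 = Real.cos (θ k) := by
    intro k
    rw [hu]
    simp only [PiLp.add_apply, PiLp.smul_apply, smul_eq_mul]
    rw [he0, he1]
    rw [EuclideanSpace.single_apply, EuclideanSpace.single_apply]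
    simp [h01.symm]
    exact fun h => absurd h (by omega)
  have huinj : Function.Injective u := by
    intro a b hab
    have h1 : Real.cos (θ a) = Real.cos (θ b) := by
      rw [← huapply a, ← huapply b, hab]
    exact hθinj (Real.injOn_cos (hθmem a) (hθmem b) h1)
  have hunorm : ∀ k, ‖u k‖ = 1 := by
    intro k
    have horth : ⟪Real.cos (θ k) • e0, Real.sin (θ k) • e1⟫ = 0 := by
      rw [real_inner_smul_left, real_inner_smul_right]
      rw [he0, he1]
      rw [EuclideanSpace.inner_single_left]
      simp [EuclideanSpace.single_apply, h01]
    have hsq : ‖u k‖ ^ 2 = 1 := by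
      rw [hu]
      rw [norm_add_sq_real, horth]
      rw [norm_smul, norm_smul]
      rw [he0, he1, EuclideanSpace.norm_single, EuclideanSpace.norm_single]
      simp only [norm_one, mul_one, Real.norm_eq_abs, sq_abs]
      have hpyth := Real.sin_sq_add_cos_sq (θ k)
      linarith
    nlinarith [norm_nonneg (u k), hsq]
  -- each singleton {u k} has the same measure as {p}
  have hmap : ∀ k, σ {u k} = σ {p} := by
    intro k
    by_cases hpk : p = u k
    · rw [hpk]
    · have hnorm : ‖p‖ = ‖u k‖ := by rw [hp, hunorm k]
      set O : EuclideanSpace ℝ (Fin (n+1)) ≃ₗᵢ[ℝ] EuclideanSpace ℝ (Fin (n+1)) :=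
        Submodule.reflection (ℝ ∙ (p - u k))ᗮ with hO
      have hOp : O p = u k := Submodule.reflection_sub hnorm
      have := hσinv O
      conv_lhs => rw [← this]
      rw [Measure.map_apply O.continuous.measurable (measurableSet_singleton _)]
      congr 1
      ext z
      simp only [Set.mem_preimage, Set.mem_singleton_iff]
      constructor
      · intro hz
        have : O z = O p := by rw [hz, hOp]
        exact O.injective this
      · intro hz; rw [hz, hOp]
  -- conclude
  by_contra hc
  have hdisj : Pairwise (Function.onFun Disjoint fun k => ({u k} : Set (EuclideanSpace ℝ (Fin (n+1))))) := by
    intro a b hab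
    simp only [Function.onFun, Set.disjoint_singleton]
    exact fun h => hab (huinj h)
  have := measure_iUnion (μ := σ) hdisj (fun k => measurableSet_singleton _)
  rw [tsum_congr hmap] at this
  rw [ENNReal.tsum_const_eq_top_of_ne_zero hc] at this
  have hle : σ (⋃ k, {u k}) ≤ 1 := by
    rw [← measure_univ (μ := σ)]
    exact measure_mono (Set.subset_univ _)
  rw [this] at hle
  simp at hle

/-- coercivity on the sphere for i.i.d. particles:
`‖f_φ‖²_{L²(μ)} ≥ ((N−1)/N²)‖φ‖²_{L²(ρ)}` when `μ = μ₀^{⊗N}` with `μ₀` absolutely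
continuous with respect to the uniform measure `σ` on `𝕊^n`. -/
theorem sphere_coercivity_iid
    (n N : ℕ) (hn : 1 ≤ n) (hN : 2 ≤ N)
    (σ : Measure (EuclideanSpace ℝ (Fin (n + 1)))) [IsProbabilityMeasure σ]
    (hσsphere : σ (Metric.sphere (0 : EuclideanSpace ℝ (Fin (n + 1))) 1)ᶜ = 0)
    (hσinv : ∀ O : EuclideanSpace ℝ (Fin (n + 1)) ≃ₗᵢ[ℝ] EuclideanSpace ℝ (Fin (n + 1)),
      Measure.map O σ = σ)
    (μ₀ : Measure (EuclideanSpace ℝ (Fin (n + 1)))) [IsProbabilityMeasure μ₀]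
    (hμ₀ : μ₀ ≪ σ)
    (μ : Measure (Fin N → EuclideanSpace ℝ (Fin (n + 1))))
    (hμ : μ = Measure.pi fun _ : Fin N => μ₀)
    (φ : ℝ → ℝ) (hφ : Measurable φ)
    (hρfin : sphereRhoSqNorm n N μ φ ≠ ⊤) :
    sphereFieldSqNorm n N μ φ ≥
      (((N - 1 : ℕ) : ℝ≥0∞) / ((N : ℝ≥0∞) ^ 2)) * sphereRhoSqNorm n N μ φ := by
  classical
  subst hμ
  have hNpos : 0 < N := by omega
  have hNR : (0:ℝ) < (N:ℝ) := by exact_mod_cast hNpos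
  have hNe0 : (N:ℝ≥0∞) ≠ 0 := by
    simp only [ne_eq, Nat.cast_eq_zero]
    omega
  have hNtop : (N:ℝ≥0∞) ≠ ⊤ := ENNReal.natCast_ne_top N
  -- measurability facts
  have hGmeas : Measurable (fun p : EuclideanSpace ℝ (Fin (n+1)) × EuclideanSpace ℝ (Fin (n+1)) =>
      φ (sphereDist p.1 p.2) • sphereW p.1 p.2) :=
    (hφ.comp measurable_sphereDist).smul measurable_sphereW
  have hqmeas : Measurable (fun p : EuclideanSpace ℝ (Fin (n+1)) × EuclideanSpace ℝ (Fin (n+1)) =>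
      ENNReal.ofReal ((φ (sphereDist p.1 p.2)) ^ 2 * (sphereDist p.1 p.2) ^ 2)) :=
    (((hφ.comp measurable_sphereDist).pow_const 2).mul
      (measurable_sphereDist.pow_const 2)).ennreal_ofReal
  set A : ℝ≥0∞ := ∫⁻ p : EuclideanSpace ℝ (Fin (n+1)) × EuclideanSpace ℝ (Fin (n+1)),
      ENNReal.ofReal ((φ (sphereDist p.1 p.2)) ^ 2 * (sphereDist p.1 p.2) ^ 2) ∂(μ₀.prod μ₀)
    with hAdef
  -- each pair term of the rho norm equals A
  have hterm : ∀ (i j : Fin N), i ≠ j →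
      (∫⁻ X : Fin N → EuclideanSpace ℝ (Fin (n+1)), ENNReal.ofReal
        ((φ (sphereDist (X i) (X j))) ^ 2 * (sphereDist (X i) (X j)) ^ 2)
        ∂(Measure.pi fun _ : Fin N => μ₀)) = A := by
    intro i j hij
    have hm := lintegral_map (μ := Measure.pi fun _ : Fin N => μ₀)
      (g := fun X : Fin N → EuclideanSpace ℝ (Fin (n+1)) => (X i, X j))
      (f := fun p : EuclideanSpace ℝ (Fin (n+1)) × EuclideanSpace ℝ (Fin (n+1)) =>
        ENNReal.ofReal ((φ (sphereDist p.1 p.2)) ^ 2 * (sphereDist p.1 p.2) ^ 2))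
      hqmeas ((measurable_pi_apply i).prodMk (measurable_pi_apply j))
    rw [map_pair_pi μ₀ hij] at hm
    exact hm.symm
  have hcNN : ((N * (N - 1) : ℕ) : ℝ≥0∞) ≠ 0 := by
    simp only [ne_eq, Nat.cast_eq_zero]
    exact Nat.mul_ne_zero (by omega) (by omega)
  have hRho : sphereRhoSqNorm n N (Measure.pi fun _ : Fin N => μ₀) φ = A := by
    unfold sphereRhoSqNorm
    have h1 : ∑ i : Fin N, ∑ j ∈ Finset.univ.erase i,
        ∫⁻ X : Fin N → EuclideanSpace ℝ (Fin (n+1)), ENNReal.ofReal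
          ((φ (sphereDist (X i) (X j))) ^ 2 * (sphereDist (X i) (X j)) ^ 2)
          ∂(Measure.pi fun _ : Fin N => μ₀)
        = ((N * (N - 1) : ℕ) : ℝ≥0∞) * A := by
      calc ∑ i : Fin N, ∑ j ∈ Finset.univ.erase i,
          ∫⁻ X : Fin N → EuclideanSpace ℝ (Fin (n+1)), ENNReal.ofReal
            ((φ (sphereDist (X i) (X j))) ^ 2 * (sphereDist (X i) (X j)) ^ 2)
            ∂(Measure.pi fun _ : Fin N => μ₀)
          = ∑ _i : Fin N, ∑ _j ∈ Finset.univ.erase _i, A :=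
            Finset.sum_congr rfl fun i _ => Finset.sum_congr rfl fun j hj =>
              hterm i j (Finset.ne_of_mem_erase hj).symm
        _ = ∑ _i : Fin N, ((N - 1 : ℕ) : ℝ≥0∞) * A := by
            refine Finset.sum_congr rfl fun i _ => ?_
            rw [Finset.sum_const, Finset.card_erase_of_mem (Finset.mem_univ i),
              Finset.card_univ, Fintype.card_fin, nsmul_eq_mul]
        _ = ((N : ℕ) : ℝ≥0∞) * (((N - 1 : ℕ) : ℝ≥0∞) * A) := by
            rw [Finset.sum_const, Finset.card_univ, Fintype.card_fin, nsmul_eq_mul]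
        _ = ((N * (N - 1) : ℕ) : ℝ≥0∞) * A := by
            rw [Nat.cast_mul, mul_assoc]
    rw [h1, ← mul_assoc, ENNReal.inv_mul_cancel hcNN (ENNReal.natCast_ne_top _), one_mul]
  have hAtop : A ≠ ⊤ := by rw [← hRho]; exact hρfin
  -- a.e. identification of ‖G‖² with the rho integrand
  have hsingle : ∀ p : EuclideanSpace ℝ (Fin (n+1)), μ₀ {p} = 0 :=
    fun p => hμ₀ (sigma_singleton_null hn σ hσsphere hσinv p)
  have hsphere0 : μ₀ {x : EuclideanSpace ℝ (Fin (n+1)) | ¬ ‖x‖ = 1} = 0 := by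
    have hseq : {x : EuclideanSpace ℝ (Fin (n+1)) | ¬ ‖x‖ = 1}
        = (Metric.sphere (0 : EuclideanSpace ℝ (Fin (n+1))) 1)ᶜ := by
      ext x
      simp [dist_zero_right]
    rw [hseq]
    exact hμ₀ hσsphere
  have hae1 : ∀ᵐ p ∂(μ₀.prod μ₀), ‖(p : EuclideanSpace ℝ (Fin (n+1)) ×
      EuclideanSpace ℝ (Fin (n+1))).1‖ = 1 := by
    rw [ae_iff]
    have hseq : {p : EuclideanSpace ℝ (Fin (n+1)) × EuclideanSpace ℝ (Fin (n+1)) |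
        ¬ ‖p.1‖ = 1} = {x : EuclideanSpace ℝ (Fin (n+1)) | ¬ ‖x‖ = 1} ×ˢ Set.univ := by
      ext p
      simp [Set.mem_prod]
    rw [hseq, Measure.prod_prod, hsphere0, zero_mul]
  have hae2 : ∀ᵐ p ∂(μ₀.prod μ₀), ‖(p : EuclideanSpace ℝ (Fin (n+1)) ×
      EuclideanSpace ℝ (Fin (n+1))).2‖ = 1 := by
    rw [ae_iff]
    have hseq : {p : EuclideanSpace ℝ (Fin (n+1)) × EuclideanSpace ℝ (Fin (n+1)) |
        ¬ ‖p.2‖ = 1} = Set.univ ×ˢ {x : EuclideanSpace ℝ (Fin (n+1)) | ¬ ‖x‖ = 1} := by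
      ext p
      simp [Set.mem_prod]
    rw [hseq, Measure.prod_prod, hsphere0, mul_zero]
  have hae3 : ∀ᵐ p ∂(μ₀.prod μ₀), (p : EuclideanSpace ℝ (Fin (n+1)) ×
      EuclideanSpace ℝ (Fin (n+1))).2 ≠ -p.1 := by
    rw [ae_iff]
    have hD : MeasurableSet {p : EuclideanSpace ℝ (Fin (n+1)) ×
        EuclideanSpace ℝ (Fin (n+1)) | p.2 = -p.1} :=
      measurableSet_eq_fun measurable_snd measurable_fst.neg
    have hseq : {p : EuclideanSpace ℝ (Fin (n+1)) × EuclideanSpace ℝ (Fin (n+1)) |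
        ¬ p.2 ≠ -p.1} = {p : EuclideanSpace ℝ (Fin (n+1)) ×
        EuclideanSpace ℝ (Fin (n+1)) | p.2 = -p.1} := by
      ext p
      simp
    rw [hseq, Measure.prod_apply hD]
    have hfib : ∀ x : EuclideanSpace ℝ (Fin (n+1)),
        (Prod.mk x ⁻¹' {p : EuclideanSpace ℝ (Fin (n+1)) ×
          EuclideanSpace ℝ (Fin (n+1)) | p.2 = -p.1}) = {-x} := by
      intro x
      ext y
      simp
    simp_rw [hfib]
    simp [hsingle]
  have hGA : ∫⁻ p : EuclideanSpace ℝ (Fin (n+1)) × EuclideanSpace ℝ (Fin (n+1)),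
      ENNReal.ofReal (‖φ (sphereDist p.1 p.2) • sphereW p.1 p.2‖ ^ 2) ∂(μ₀.prod μ₀) = A := by
    rw [hAdef]
    apply lintegral_congr_ae
    filter_upwards [hae1, hae2, hae3] with p hp1 hp2 hp3
    congr 1
    rw [norm_smul, mul_pow, Real.norm_eq_abs, sq_abs, sphereW_norm_eq hp1 hp2 hp3]
  -- key bound for each particle
  have hkey : ∀ i : Fin N, ∑ _j ∈ Finset.univ.erase i, A ≤
      ∫⁻ X : Fin N → EuclideanSpace ℝ (Fin (n+1)), ENNReal.ofReal
        (‖∑ j ∈ Finset.univ.erase i, φ (sphereDist (X i) (X j)) • sphereW (X i) (X j)‖ ^ 2)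
        ∂(Measure.pi fun _ : Fin N => μ₀) :=
    fun i => key_lintegral_bound μ₀
      (fun x y => φ (sphereDist x y) • sphereW x y) hGmeas i A hGA hAtop
  have hsum_const : ∀ i : Fin N, (∑ _j ∈ Finset.univ.erase i, A)
      = ((N - 1 : ℕ) : ℝ≥0∞) * A := by
    intro i
    rw [Finset.sum_const, Finset.card_erase_of_mem (Finset.mem_univ i),
      Finset.card_univ, Fintype.card_fin, nsmul_eq_mul]
  -- measurability of the per-particle field sums
  have hTmeasN : ∀ i : Fin N, Measurable (fun X : Fin N → EuclideanSpace ℝ (Fin (n+1)) =>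
      ∑ j ∈ Finset.univ.erase i, φ (sphereDist (X i) (X j)) • sphereW (X i) (X j)) := by
    intro i
    apply Finset.measurable_sum
    intro j _
    exact Measurable.comp (f := fun X : Fin N → EuclideanSpace ℝ (Fin (n+1)) => (X i, X j))
      (g := fun p : EuclideanSpace ℝ (Fin (n+1)) × EuclideanSpace ℝ (Fin (n+1)) =>
        φ (sphereDist p.1 p.2) • sphereW p.1 p.2) hGmeas
      ((measurable_pi_apply i).prodMk (measurable_pi_apply j))
  -- pointwise rewriting of the field integrand
  have hpt : ∀ X : Fin N → EuclideanSpace ℝ (Fin (n+1)),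
      ENNReal.ofReal ((N : ℝ)⁻¹ * ∑ i : Fin N, ‖sphereField n N φ X i‖ ^ 2)
      = ∑ i : Fin N, ENNReal.ofReal (((N : ℝ)⁻¹) ^ 3 *
          ‖∑ j ∈ Finset.univ.erase i, φ (sphereDist (X i) (X j)) • sphereW (X i) (X j)‖ ^ 2) := by
    intro X
    rw [← ENNReal.ofReal_sum_of_nonneg (fun i _ => by positivity)]
    congr 1
    rw [Finset.mul_sum]
    refine Finset.sum_congr rfl fun i _ => ?_
    simp only [sphereField]
    rw [norm_smul, mul_pow, Real.norm_eq_abs, sq_abs]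
    ring
  have hintmeas : ∀ i : Fin N, Measurable (fun X : Fin N → EuclideanSpace ℝ (Fin (n+1)) =>
      ENNReal.ofReal (((N : ℝ)⁻¹) ^ 3 *
        ‖∑ j ∈ Finset.univ.erase i, φ (sphereDist (X i) (X j)) • sphereW (X i) (X j)‖ ^ 2)) :=
    fun i => (((hTmeasN i).norm.pow_const 2).const_mul _).ennreal_ofReal
  have hsplit : ∀ i : Fin N,
      ∫⁻ X : Fin N → EuclideanSpace ℝ (Fin (n+1)), ENNReal.ofReal (((N : ℝ)⁻¹) ^ 3 *
        ‖∑ j ∈ Finset.univ.erase i, φ (sphereDist (X i) (X j)) • sphereW (X i) (X j)‖ ^ 2)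
        ∂(Measure.pi fun _ : Fin N => μ₀)
      = ENNReal.ofReal (((N : ℝ)⁻¹) ^ 3) *
        ∫⁻ X : Fin N → EuclideanSpace ℝ (Fin (n+1)), ENNReal.ofReal
          (‖∑ j ∈ Finset.univ.erase i, φ (sphereDist (X i) (X j)) • sphereW (X i) (X j)‖ ^ 2)
          ∂(Measure.pi fun _ : Fin N => μ₀) := by
    intro i
    rw [← lintegral_const_mul _ ((hTmeasN i).norm.pow_const 2).ennreal_ofReal]
    apply lintegral_congr
    intro X
    rw [← ENNReal.ofReal_mul (by positivity)]
  have hofRealc : ENNReal.ofReal (((N : ℝ)⁻¹) ^ 3) = ((N : ℝ≥0∞)⁻¹) ^ 3 := by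
    rw [ENNReal.ofReal_pow (by positivity), ENNReal.ofReal_inv_of_pos hNR,
      ENNReal.ofReal_natCast]
  have hcoef : (((N - 1 : ℕ) : ℝ≥0∞) / ((N : ℝ≥0∞) ^ 2)) * A
      = (N : ℝ≥0∞) * (ENNReal.ofReal (((N : ℝ)⁻¹) ^ 3) * (((N - 1 : ℕ) : ℝ≥0∞) * A)) := by
    rw [hofRealc, div_eq_mul_inv, ENNReal.inv_pow]
    rw [show (N : ℝ≥0∞) * (((N : ℝ≥0∞)⁻¹) ^ 3 * (((N - 1 : ℕ) : ℝ≥0∞) * A))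
        = ((N : ℝ≥0∞) * (N : ℝ≥0∞)⁻¹) * (((N : ℝ≥0∞)⁻¹) ^ 2 * (((N - 1 : ℕ) : ℝ≥0∞) * A))
        from by ring]
    rw [ENNReal.mul_inv_cancel hNe0 hNtop, one_mul]
    ring
  rw [ge_iff_le, hRho]
  calc (((N - 1 : ℕ) : ℝ≥0∞) / ((N : ℝ≥0∞) ^ 2)) * A
      = ∑ _i : Fin N, ENNReal.ofReal (((N : ℝ)⁻¹) ^ 3) * (((N - 1 : ℕ) : ℝ≥0∞) * A) := by
        rw [Finset.sum_const, Finset.card_univ, Fintype.card_fin, nsmul_eq_mul, ← hcoef]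
    _ ≤ ∑ i : Fin N, ENNReal.ofReal (((N : ℝ)⁻¹) ^ 3) *
        ∫⁻ X : Fin N → EuclideanSpace ℝ (Fin (n+1)), ENNReal.ofReal
          (‖∑ j ∈ Finset.univ.erase i, φ (sphereDist (X i) (X j)) • sphereW (X i) (X j)‖ ^ 2)
          ∂(Measure.pi fun _ : Fin N => μ₀) := by
        refine Finset.sum_le_sum fun i _ => mul_le_mul_right ?_ _
        have h := hkey i
        rwa [hsum_const i] at h
    _ = ∑ i : Fin N, ∫⁻ X : Fin N → EuclideanSpace ℝ (Fin (n+1)),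
        ENNReal.ofReal (((N : ℝ)⁻¹) ^ 3 *
          ‖∑ j ∈ Finset.univ.erase i, φ (sphereDist (X i) (X j)) • sphereW (X i) (X j)‖ ^ 2)
          ∂(Measure.pi fun _ : Fin N => μ₀) :=
        Finset.sum_congr rfl fun i _ => (hsplit i).symm
    _ = ∫⁻ X : Fin N → EuclideanSpace ℝ (Fin (n+1)),
        ∑ i : Fin N, ENNReal.ofReal (((N : ℝ)⁻¹) ^ 3 *
          ‖∑ j ∈ Finset.univ.erase i, φ (sphereDist (X i) (X j)) • sphereW (X i) (X j)‖ ^ 2)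
          ∂(Measure.pi fun _ : Fin N => μ₀) :=
        (lintegral_finset_sum _ fun i _ => hintmeas i).symm
    _ = sphereFieldSqNorm n N (Measure.pi fun _ : Fin N => μ₀) φ := by
        unfold sphereFieldSqNorm
        exact (lintegral_congr hpt).symm
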